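/- Let α > 0, c ∈ ℝⁿ, x ∈ ℝⁿ, and for γ > 0, μ > 0 let φ(x, μ, γ) be the unique minimizer over u ∈ ℝⁿ of (1/2)‖x − u‖² + γμ B(u), where B(u) = −ln(α − ‖u − c‖²) if ‖u − c‖² < α and +∞ otherwise. Define M(x, μ, γ) = Iₙ − 2 (x − φ(x, μ, γ)) (φ(x, μ, γ) − c)ᵀ / (α − 3‖φ(x, μ, γ) − c‖² + 2γμ + 2 (φ(x, μ, γ) − c)ᵀ(x − c)). Then φ(x, ·, ·) is differentiable on (0, +∞)², with ∂φ/∂μ (x, μ, γ) = (−2γ/(α − ‖φ(x, μ, γ) − c‖² + 2γμ)) M(x, μ, γ)(φ(x, μ, γ) − c) and ∂φ/∂γ (x, μ, γ) = (−2μ/(α − ‖φ(x, μ, γ) − c‖² + 2γμ)) M(x, μ, γ)(φ(x, μ, γ) − c). -/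

import Mathlib

open scoped InnerProductSpace
open Filter
open scoped Topology

/-- Logarithmic barrier of the Euclidean ball `{u : ‖u - c‖² ≤ α}`. -/
noncomputable def ballBarrier {n : ℕ} (α : ℝ) (c u : EuclideanSpace ℝ (Fin n)) : EReal :=
  if ‖u - c‖ ^ 2 < α then ((- Real.log (α - ‖u - c‖ ^ 2) : ℝ) : EReal) else ⊤

/-- The objective `u ↦ (1/2)‖x-u‖² + γμ B(u)` defining `prox_{γμB}(x)`. -/
noncomputable def ballProxObj {n : ℕ} (α : ℝ) (c : EuclideanSpace ℝ (Fin n)) (γ μ : ℝ)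
    (x u : EuclideanSpace ℝ (Fin n)) : EReal :=
  ((1 / 2 * ‖x - u‖ ^ 2 : ℝ) : EReal) + ((γ * μ : ℝ) : EReal) * ballBarrier α c u

/-- `M(x,μ,γ)` applied to the vector `φ(x,μ,γ) - c`, where
`M = Iₙ − 2(x−φ)(φ−c)ᵀ / (α − 3‖φ−c‖² + 2γμ + 2(φ−c)ᵀ(x−c))`. -/
noncomputable def ballM {n : ℕ} (α γ μ : ℝ) (c x φxμγ : EuclideanSpace ℝ (Fin n)) :
    EuclideanSpace ℝ (Fin n) :=
  (φxμγ - c) -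
    (2 * ‖φxμγ - c‖ ^ 2 /
        (α - 3 * ‖φxμγ - c‖ ^ 2 + 2 * γ * μ + 2 * ⟪φxμγ - c, x - c⟫_ℝ)) • (x - φxμγ)

lemma ball_cand_min {n : ℕ} {α : ℝ} (hα : 0 < α) {c x : EuclideanSpace ℝ (Fin n)}
    {μ γ t : ℝ} (hμ : 0 < μ) (hγ : 0 < γ) (ht : 0 < t)
    (htα : t ^ 2 * ‖x - c‖ ^ 2 < α)
    (hF : (t - 1) * (α - t ^ 2 * ‖x - c‖ ^ 2) + 2 * (γ * μ) * t = 0)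
    (u : EuclideanSpace ℝ (Fin n)) :
    ballProxObj α c γ μ x (c + t • (x - c)) ≤ ballProxObj α c γ μ x u := by
  set R2 := ‖x - c‖ ^ 2 with hR2
  have hR2nn : 0 ≤ R2 := by positivity
  set ust : EuclideanSpace ℝ (Fin n) := c + t • (x - c) with hust
  have hustc : ust - c = t • (x - c) := add_sub_cancel_left c _
  have hnust : ‖ust - c‖ ^ 2 = t ^ 2 * R2 := by
    rw [hustc, norm_smul]; simp [mul_pow, abs_of_pos ht, hR2]
  have hxu : x - ust = (1 - t) • (x - c) := by rw [hust]; module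
  have ha : 0 < α - t ^ 2 * R2 := by linarith
  have hsm : 2 * (γ * μ) * t = (1 - t) * (α - t ^ 2 * R2) := by linarith [hF]
  -- value at candidate
  have hobj1 : ballProxObj α c γ μ x ust =
      ((1 / 2 * ((1-t)^2 * R2) + (γ * μ) * (- Real.log (α - t ^ 2 * R2)) : ℝ) : EReal) := by
    rw [ballProxObj, ballBarrier, hnust, if_pos htα, ← EReal.coe_mul, ← EReal.coe_add, hxu,
      norm_smul]
    norm_num [mul_pow, sq_abs, hR2]
  by_cases hu : ‖u - c‖ ^ 2 < α
  · have hobj2 : ballProxObj α c γ μ x u =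
        ((1 / 2 * ‖x - u‖ ^ 2 + (γ * μ) * (- Real.log (α - ‖u - c‖ ^ 2)) : ℝ) : EReal) := by
      rw [ballProxObj, ballBarrier, if_pos hu, ← EReal.coe_mul, ← EReal.coe_add]
    rw [hobj1, hobj2, EReal.coe_le_coe_iff]
    set v : EuclideanSpace ℝ (Fin n) := u - ust with hv
    have hb : 0 < α - ‖u - c‖ ^ 2 := by linarith
    set I := ⟪x - c, v⟫_ℝ with hI
    have h1 : ‖u - c‖ ^ 2 = t ^ 2 * R2 + 2 * t * I + ‖v‖ ^ 2 := by
      have : u - c = t • (x - c) + v := by rw [hv, hust]; module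
      rw [this, norm_add_sq_real, norm_smul, real_inner_smul_left]
      simp [mul_pow, sq_abs, hR2, hI]
      try ring
    have h2 : ‖x - u‖ ^ 2 = (1-t)^2 * R2 - 2 * ((1-t) * I) + ‖v‖ ^ 2 := by
      have : x - u = (1 - t) • (x - c) - v := by rw [hv, hust]; module
      rw [this, norm_sub_sq_real, norm_smul, real_inner_smul_left]
      simp [mul_pow, sq_abs, hR2, hI]
      try ring
    -- log inequality
    have hlog : Real.log (α - ‖u - c‖ ^ 2) - Real.log (α - t ^ 2 * R2)
        ≤ (α - ‖u - c‖ ^ 2) / (α - t ^ 2 * R2) - 1 := by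
      rw [← Real.log_div (by linarith) (by linarith)]
      exact Real.log_le_sub_one_of_pos (by positivity)
    have hVnn : (0:ℝ) ≤ ‖v‖ ^ 2 := by positivity
    set w : ℝ := γ * μ / (α - t ^ 2 * R2) with hw
    have hwpos : 0 < w := by positivity
    have hwt : 2 * w * t = 1 - t := by
      rw [hw]; field_simp; linarith [hsm]
    have hlog2 : (γ * μ) * (- Real.log (α - ‖u - c‖ ^ 2))
        ≥ (γ * μ) * (- Real.log (α - t ^ 2 * R2)) + w * (2 * t * I + ‖v‖ ^ 2) := by
      have h3 : (α - t ^ 2 * R2) - (α - ‖u - c‖ ^ 2) = 2 * t * I + ‖v‖ ^ 2 := by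
        rw [h1]; ring
      have h4 : - Real.log (α - ‖u - c‖ ^ 2) ≥ - Real.log (α - t ^ 2 * R2)
          + (2 * t * I + ‖v‖ ^ 2) / (α - t ^ 2 * R2) := by
        have h5 : (α - ‖u - c‖ ^ 2) / (α - t ^ 2 * R2) - 1
            = - ((2 * t * I + ‖v‖ ^ 2) / (α - t ^ 2 * R2)) := by
          field_simp
          linarith [h3]
        linarith [hlog, h5]
      have h6 : (γ * μ) * (- Real.log (α - t ^ 2 * R2) + (2 * t * I + ‖v‖ ^ 2) / (α - t ^ 2 * R2))
          = (γ * μ) * (- Real.log (α - t ^ 2 * R2)) + w * (2 * t * I + ‖v‖ ^ 2) := by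
        rw [hw]; field_simp
      have h7 := mul_le_mul_of_nonneg_left h4 (le_of_lt (mul_pos hγ hμ))
      rw [h6] at h7
      linarith [h7]
    have h9 : w * (2 * t * I + ‖v‖ ^ 2) = (1 - t) * I + w * ‖v‖ ^ 2 := by
      have : w * (2 * t * I + ‖v‖ ^ 2) = (2 * w * t) * I + w * ‖v‖ ^ 2 := by ring
      rw [this, hwt]
    have h10 : 0 ≤ w * ‖v‖ ^ 2 := mul_nonneg hwpos.le hVnn
    rw [h2]
    linarith [hlog2, h9, h10]
  · have : ballProxObj α c γ μ x u = ⊤ := by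
      rw [ballProxObj, ballBarrier, if_neg hu, EReal.coe_mul_top_of_pos (by positivity),
        EReal.coe_add_top]
    rw [this, hobj1]
    exact le_top

lemma ball_exists_root {α R2 s : ℝ} (hα : 0 < α) (hR2 : 0 ≤ R2) (hs : 0 < s) :
    ∃ t : ℝ, 0 < t ∧ t < 1 ∧ t ^ 2 * R2 < α ∧ (t - 1) * (α - t ^ 2 * R2) + 2 * s * t = 0 := by
  set F : ℝ → ℝ := fun t => (t - 1) * (α - t ^ 2 * R2) + 2 * s * t with hFdef
  have hFc : Continuous F := by fun_prop
  by_cases hcase : R2 ≤ α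
  · -- tbar = 1
    have h0 : F 0 < 0 := by simp [hFdef]; linarith
    have h1 : 0 < F 1 := by simp [hFdef]; positivity
    obtain ⟨t, ht, hFt⟩ := intermediate_value_Ioo (by norm_num : (0:ℝ) ≤ 1)
      hFc.continuousOn (show (0:ℝ) ∈ Set.Ioo (F 0) (F 1) from ⟨h0, h1⟩)
    refine ⟨t, ht.1, ht.2, ?_, hFt⟩
    rcases eq_or_lt_of_le hR2 with h | h
    · rw [← h]; simpa using hα
    · have : t ^ 2 < 1 := by nlinarith [ht.1, ht.2]
      nlinarith
  · push_neg at hcase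
    have hR2pos : 0 < R2 := lt_trans hα hcase
    set tb : ℝ := Real.sqrt (α / R2) with htb
    have htbpos : 0 < tb := Real.sqrt_pos.2 (by positivity)
    have htbsq : tb ^ 2 * R2 = α := by
      rw [htb, Real.sq_sqrt (by positivity)]; field_simp
    have htb1 : tb < 1 := by
      by_contra h
      push_neg at h
      have h2 : 1 * 1 ≤ tb * tb := mul_le_mul h h zero_le_one (by linarith)
      nlinarith [htbsq]
    have h0 : F 0 < 0 := by simp [hFdef]; linarith
    have h1 : 0 < F tb := by
      have : F tb = 2 * s * tb := by rw [hFdef]; simp only; rw [htbsq]; ring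
      rw [this]; positivity
    obtain ⟨t, ht, hFt⟩ := intermediate_value_Ioo htbpos.le
      hFc.continuousOn (show (0:ℝ) ∈ Set.Ioo (F 0) (F tb) from ⟨h0, h1⟩)
    refine ⟨t, ht.1, lt_trans ht.2 htb1, ?_, hFt⟩
    have : t ^ 2 < tb ^ 2 := by nlinarith [ht.1, ht.2]
    nlinarith [htbsq]

lemma ball_key_min {n : ℕ} {α : ℝ} (hα : 0 < α) {c x : EuclideanSpace ℝ (Fin n)}
    {φ : ℝ → ℝ → EuclideanSpace ℝ (Fin n)}
    (hφ : ∀ μ γ : ℝ, 0 < μ → 0 < γ → ∀ u : EuclideanSpace ℝ (Fin n), u ≠ φ μ γ →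
      ballProxObj α c γ μ x (φ μ γ) < ballProxObj α c γ μ x u)
    {μ γ t : ℝ} (hμ : 0 < μ) (hγ : 0 < γ) (ht : 0 < t)
    (htα : t ^ 2 * ‖x - c‖ ^ 2 < α)
    (hF : (t - 1) * (α - t ^ 2 * ‖x - c‖ ^ 2) + 2 * (γ * μ) * t = 0) :
    φ μ γ = c + t • (x - c) := by
  by_contra h
  have h1 := hφ μ γ hμ hγ (c + t • (x - c)) (fun he => h he.symm)
  have h2 := ball_cand_min hα hμ hγ ht htα hF (φ μ γ)
  exact absurd h2 (not_le.2 h1)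

-- IFT part: for s0>0 with root t0, get local inverse g with properties

lemma ball_local_inverse {α R2 : ℝ} (hα : 0 < α) (hR2 : 0 ≤ R2) {s0 t0 : ℝ}
    (hs0 : 0 < s0) (ht0 : 0 < t0) (ht01 : t0 < 1) (ht0α : t0 ^ 2 * R2 < α)
    (hF0 : (t0 - 1) * (α - t0 ^ 2 * R2) + 2 * s0 * t0 = 0) :
    ∃ g : ℝ → ℝ,
      HasDerivAt g (-(2 * t0) / (α - 3 * t0 ^ 2 * R2 + 2 * t0 * R2 + 2 * s0)) s0 ∧
      g s0 = t0 ∧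
      (∀ᶠ s' in 𝓝 s0, 0 < g s' ∧ g s' ^ 2 * R2 < α ∧
        (g s' - 1) * (α - g s' ^ 2 * R2) + 2 * s' * g s' = 0) := by
  have hsm0 : (1 - t0) * (α - t0 ^ 2 * R2) = 2 * s0 * t0 := by linarith
  set D : ℝ := α - 3 * t0 ^ 2 * R2 + 2 * t0 * R2 + 2 * s0 with hDdef
  have hDpos : 0 < D := by nlinarith [mul_nonneg (mul_nonneg ht0.le hR2) (by linarith : (0:ℝ) ≤ 1 - t0)]
  set H : ℝ → ℝ := fun t => (1 - t) * (α - t ^ 2 * R2) / (2 * t) with hHdef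
  have hA : HasStrictDerivAt (fun t : ℝ => 1 - t) (-1) t0 := by
    simpa using (hasStrictDerivAt_id t0).const_sub 1
  have hB : HasStrictDerivAt (fun t : ℝ => α - t ^ 2 * R2) (-(2 * t0 * R2)) t0 := by
    simpa using ((hasStrictDerivAt_pow 2 t0).mul_const R2).const_sub α
  have hden : HasStrictDerivAt (fun t : ℝ => 2 * t) 2 t0 := by
    simpa using (hasStrictDerivAt_id t0).const_mul 2
  have hH : HasStrictDerivAt H (-D / (2 * t0)) t0 := by
    convert (hA.mul hB).div hden (by positivity) using 1
    · rfl
    · rfl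
    · rfl
    simp only [Pi.mul_apply]
    rw [hDdef]
    field_simp
    ring_nf
    nlinarith [hsm0]
  have hH' : -D / (2 * t0) ≠ 0 :=
    ne_of_lt (div_neg_of_neg_of_pos (by linarith) (by linarith))
  have hHt0 : H t0 = s0 := by
    rw [hHdef]; simp only
    rw [hsm0]; field_simp
  set g : ℝ → ℝ := hH.localInverse H _ t0 hH' with hgdef
  have hgd : HasStrictDerivAt g (-D / (2 * t0))⁻¹ s0 := by
    have := hH.to_localInverse (hf' := hH')
    rwa [hHt0] at this
  have hg0 : g s0 = t0 := by
    have := (hH.hasStrictFDerivAt_equiv hH').localInverse_apply_image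
    rwa [hHt0] at this
  have hrinv : ∀ᶠ s' in 𝓝 s0, H (g s') = s' := by
    have := (hH.hasStrictFDerivAt_equiv hH').eventually_right_inverse
    rwa [hHt0] at this
  have hgc : Tendsto g (𝓝 s0) (𝓝 t0) := by
    have := (hH.hasStrictFDerivAt_equiv hH').localInverse_continuousAt
    rw [hHt0] at this
    rw [← hg0]
    exact this
  have hev1 : ∀ᶠ s' in 𝓝 s0, 0 < g s' := hgc.eventually_const_lt ht0
  have hev2 : ∀ᶠ s' in 𝓝 s0, g s' ^ 2 * R2 < α := by
    have h2 : Tendsto (fun s' => g s' ^ 2 * R2) (𝓝 s0) (𝓝 (t0 ^ 2 * R2)) :=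
      (hgc.pow 2).mul_const R2
    exact h2.eventually_lt_const ht0α
  refine ⟨g, ?_, hg0, ?_⟩
  · have heq : (-D / (2 * t0))⁻¹ = -(2 * t0) / D := by
      rw [inv_div, div_neg, neg_div]
    rw [hDdef] at heq
    rw [← heq]
    exact hgd.hasDerivAt
  · filter_upwards [hev1, hev2, hrinv] with s' h1 h2 h3
    refine ⟨h1, h2, ?_⟩
    rw [hHdef] at h3
    simp only at h3
    rw [div_eq_iff (by positivity : (2 : ℝ) * g s' ≠ 0)] at h3
    linarith [h3]

theorem ball_prox_deriv_mu_gamma {n : ℕ} (α : ℝ) (hα : 0 < α)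
    (c x : EuclideanSpace ℝ (Fin n))
    (φ : ℝ → ℝ → EuclideanSpace ℝ (Fin n))
    (hφ : ∀ μ γ : ℝ, 0 < μ → 0 < γ → ∀ u : EuclideanSpace ℝ (Fin n), u ≠ φ μ γ →
      ballProxObj α c γ μ x (φ μ γ) < ballProxObj α c γ μ x u) :
    ∀ μ γ : ℝ, 0 < μ → 0 < γ →
      DifferentiableAt ℝ (fun p : ℝ × ℝ => φ p.1 p.2) (μ, γ) ∧
      HasDerivAt (fun t : ℝ => φ t γ)
        ((-2 * γ / (α - ‖φ μ γ - c‖ ^ 2 + 2 * γ * μ)) • ballM α γ μ c x (φ μ γ)) μ ∧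
      HasDerivAt (fun t : ℝ => φ μ t)
        ((-2 * μ / (α - ‖φ μ γ - c‖ ^ 2 + 2 * γ * μ)) • ballM α γ μ c x (φ μ γ)) γ := by
  intro μ0 γ0 hμ0 hγ0
  have hR2 : (0:ℝ) ≤ ‖x - c‖ ^ 2 := by positivity
  have hs0 : (0:ℝ) < γ0 * μ0 := mul_pos hγ0 hμ0
  obtain ⟨t0, ht0, ht01, ht0α, hF0⟩ := ball_exists_root hα hR2 hs0
  obtain ⟨g, hgd, hg0, hev⟩ := ball_local_inverse hα hR2 hs0 ht0 ht01 ht0α hF0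
  set R2 := ‖x - c‖ ^ 2 with hR2def
  have ha0 : 0 < α - t0 ^ 2 * R2 := by linarith
  have hD : 0 < α - 3 * t0 ^ 2 * R2 + 2 * t0 * R2 + 2 * (γ0 * μ0) := by
    nlinarith [mul_nonneg (mul_nonneg ht0.le hR2) (by linarith : (0:ℝ) ≤ 1 - t0)]
  -- the key eventual identity
  have hkey : ∀ᶠ p : ℝ × ℝ in 𝓝 (μ0, γ0),
      φ p.1 p.2 = c + g (p.2 * p.1) • (x - c) := by
    have hmul : Filter.Tendsto (fun p : ℝ × ℝ => p.2 * p.1) (𝓝 (μ0, γ0)) (𝓝 (γ0 * μ0)) :=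
      (continuous_snd.mul continuous_fst).tendsto (μ0, γ0)
    have hpos1 : ∀ᶠ p : ℝ × ℝ in 𝓝 (μ0, γ0), 0 < p.1 :=
      (continuous_fst.tendsto (μ0, γ0)).eventually_const_lt hμ0
    have hpos2 : ∀ᶠ p : ℝ × ℝ in 𝓝 (μ0, γ0), 0 < p.2 :=
      (continuous_snd.tendsto (μ0, γ0)).eventually_const_lt hγ0
    filter_upwards [hpos1, hpos2, hmul.eventually hev] with p h1 h2 h3
    obtain ⟨hgt, hgα, hgF⟩ := h3
    exact ball_key_min hα hφ h1 h2 hgt hgα (by rw [← hR2def]; linarith [hgF])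
  -- φ at the point itself
  have hφeq0 : φ μ0 γ0 = c + t0 • (x - c) :=
    ball_key_min hα hφ hμ0 hγ0 ht0 ht0α (by rw [← hR2def]; linarith [hF0])
  have hc0 : φ μ0 γ0 - c = t0 • (x - c) := by rw [hφeq0]; exact add_sub_cancel_left c _
  have hn0 : ‖φ μ0 γ0 - c‖ ^ 2 = t0 ^ 2 * R2 := by
    rw [hc0, norm_smul]; simp [mul_pow, abs_of_pos ht0, hR2def]
  have hxφ : x - φ μ0 γ0 = (1 - t0) • (x - c) := by rw [hφeq0]; module
  have hin : ⟪φ μ0 γ0 - c, x - c⟫_ℝ = t0 * R2 := by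
    rw [hc0, real_inner_smul_left, real_inner_self_eq_norm_sq, hR2def]
  -- evaluate ballM
  have hMM : ballM α γ0 μ0 c x (φ μ0 γ0) =
      (t0 * (α - t0 ^ 2 * R2 + 2 * (γ0 * μ0)) /
        (α - 3 * t0 ^ 2 * R2 + 2 * t0 * R2 + 2 * (γ0 * μ0))) • (x - c) := by
    have hd1 : (0:ℝ) < α - 3 * (t0 ^ 2 * R2) + 2 * γ0 * μ0 + 2 * (t0 * R2) := by
      nlinarith [hD]
    rw [ballM, hn0, hin, hc0, hxφ, smul_smul, ← sub_smul]
    congr 1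
    rw [div_mul_eq_mul_div, sub_div' hd1.ne', div_eq_div_iff hd1.ne' hD.ne']
    ring
  have hA0 : α - ‖φ μ0 γ0 - c‖ ^ 2 + 2 * γ0 * μ0 = α - t0 ^ 2 * R2 + 2 * (γ0 * μ0) := by
    rw [hn0]; ring
  have hApos : 0 < α - t0 ^ 2 * R2 + 2 * (γ0 * μ0) := by linarith
  refine ⟨?_, ?_, ?_⟩
  · -- differentiability in the pair
    have hgdiff : DifferentiableAt ℝ g (γ0 * μ0) := hgd.differentiableAt
    have hmd : DifferentiableAt ℝ (fun p : ℝ × ℝ => p.2 * p.1) (μ0, γ0) :=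
      (differentiableAt_snd.mul differentiableAt_fst)
    have h1 : DifferentiableAt ℝ (fun p : ℝ × ℝ => g (p.2 * p.1)) (μ0, γ0) :=
      hgdiff.comp (μ0, γ0) hmd
    have h2 : DifferentiableAt ℝ (fun p : ℝ × ℝ => c + g (p.2 * p.1) • (x - c)) (μ0, γ0) :=
      (h1.smul_const (x - c)).const_add c
    exact h2.congr_of_eventuallyEq hkey
  · -- derivative in μ
    have hlin : HasDerivAt (fun μ : ℝ => γ0 * μ) γ0 μ0 := by
      simpa using (hasDerivAt_id μ0).const_mul γ0
    have hcomp : HasDerivAt (fun μ : ℝ => g (γ0 * μ))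
        (-(2 * t0) / (α - 3 * t0 ^ 2 * R2 + 2 * t0 * R2 + 2 * (γ0 * μ0)) * γ0) μ0 :=
      HasDerivAt.comp μ0 hgd hlin
    have hder : HasDerivAt (fun μ : ℝ => c + g (γ0 * μ) • (x - c))
        ((-(2 * t0) / (α - 3 * t0 ^ 2 * R2 + 2 * t0 * R2 + 2 * (γ0 * μ0)) * γ0) • (x - c)) μ0 :=
      (hcomp.smul_const (x - c)).const_add c
    have hkeyμ : (fun μ : ℝ => φ μ γ0) =ᶠ[𝓝 μ0] (fun μ : ℝ => c + g (γ0 * μ) • (x - c)) := by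
      have htend : Filter.Tendsto (fun μ : ℝ => (μ, γ0)) (𝓝 μ0) (𝓝 (μ0, γ0)) :=
        (continuous_id.prodMk continuous_const).tendsto μ0
      exact htend.eventually hkey
    have := hder.congr_of_eventuallyEq hkeyμ
    refine this.congr_deriv ?_
    symm
    rw [hMM, hA0, smul_smul]
    congr 1
    field_simp [hApos.ne', hD.ne']
  · -- derivative in γ
    have hlin : HasDerivAt (fun γ : ℝ => γ * μ0) μ0 γ0 := by
      simpa using (hasDerivAt_id γ0).mul_const μ0
    have hcomp : HasDerivAt (fun γ : ℝ => g (γ * μ0))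
        (-(2 * t0) / (α - 3 * t0 ^ 2 * R2 + 2 * t0 * R2 + 2 * (γ0 * μ0)) * μ0) γ0 :=
      HasDerivAt.comp γ0 hgd hlin
    have hder : HasDerivAt (fun γ : ℝ => c + g (γ * μ0) • (x - c))
        ((-(2 * t0) / (α - 3 * t0 ^ 2 * R2 + 2 * t0 * R2 + 2 * (γ0 * μ0)) * μ0) • (x - c)) γ0 :=
      (hcomp.smul_const (x - c)).const_add c
    have hkeyγ : (fun γ : ℝ => φ μ0 γ) =ᶠ[𝓝 γ0] (fun γ : ℝ => c + g (γ * μ0) • (x - c)) := by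
      have htend : Filter.Tendsto (fun γ : ℝ => (μ0, γ)) (𝓝 γ0) (𝓝 (μ0, γ0)) :=
        (continuous_const.prodMk continuous_id).tendsto γ0
      exact htend.eventually hkey
    have := hder.congr_of_eventuallyEq hkeyγ
    refine this.congr_deriv ?_
    symm
    rw [hMM, hA0, smul_smul]
    congr 1
    field_simp [hApos.ne', hD.ne']
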